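/- A uniformly recurrent bi-infinite word x over a finite alphabet A is modulo-recurrent if and only if for every finite alphabet B and every cellular automaton π : A^ℤ → B^ℤ, the word π(x) is either aperiodic or constant. -/

import Mathlib

open scoped ENat Classical

/-- The length-`n` factor of the bi-infinite word `x` starting at position `i`. -/
def subwordZ {A : Type*} (x : ℤ → A) (i : ℤ) (n : ℕ) : List A :=
  (List.range n).map fun j => x (i + (j : ℤ))

/-- `w` occurs in `x` at position `i`. -/
def occursAt {A : Type*} (x : ℤ → A) (w : List A) (i : ℤ) : Prop :=
  subwordZ x i w.length = w

/-- `w` is a factor of the bi-infinite word `x`. -/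
def IsFactorZ {A : Type*} (x : ℤ → A) (w : List A) : Prop :=
  ∃ i : ℤ, occursAt x w i

/-- `Γ` is a string attractor of the bi-infinite word `x`: every nonempty factor
has an occurrence crossing a position of `Γ`. -/
def IsAttractorZ {A : Type*} (x : ℤ → A) (Γ : Set ℤ) : Prop :=
  ∀ w : List A, w ≠ [] → IsFactorZ x w →
    ∃ i : ℤ, occursAt x w i ∧ ∃ p ∈ Γ, i ≤ p ∧ p < i + (w.length : ℤ)

/-- The span `sup Γ - inf Γ` of a set of integers (`⊤` when unbounded). -/
noncomputable def setSpan (Γ : Set ℤ) : ℕ∞ :=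
  ⨆ a ∈ Γ, ⨆ b ∈ Γ, ((b - a).toNat : ℕ∞)

/-- The string attractor span of a bi-infinite word. -/
noncomputable def wordSpan {A : Type*} (x : ℤ → A) : ℕ∞ :=
  ⨅ Γ ∈ {Γ : Set ℤ | IsAttractorZ x Γ}, setSpan Γ

/-- The factor complexity of a bi-infinite word. -/
noncomputable def complexityZ {A : Type*} (x : ℤ → A) (n : ℕ) : ℕ :=
  Nat.card {w : List A // w.length = n ∧ IsFactorZ x w}

/-- The shift `S^k`. -/
def shiftZ {A : Type*} (k : ℤ) (x : ℤ → A) : ℤ → A := fun i => x (i + k)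

def PositivelyPeriodicZ {A : Type*} (x : ℤ → A) : Prop :=
  ∃ (N : ℤ) (p : ℕ), 1 ≤ p ∧ ∀ n : ℤ, N ≤ n → x n = x (n + (p : ℤ))

def NegativelyPeriodicZ {A : Type*} (x : ℤ → A) : Prop :=
  ∃ (N : ℤ) (p : ℕ), 1 ≤ p ∧ ∀ n : ℤ, n ≤ N → x n = x (n - (p : ℤ))

def EventuallyPeriodicZ {A : Type*} (x : ℤ → A) : Prop :=
  PositivelyPeriodicZ x ∨ NegativelyPeriodicZ x

def AperiodicZ {A : Type*} (x : ℤ → A) : Prop := ¬ EventuallyPeriodicZ x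

def PurelyPeriodicZ {A : Type*} (x : ℤ → A) : Prop :=
  ∃ p : ℕ, 1 ≤ p ∧ ∀ n : ℤ, x n = x (n + (p : ℤ))

def LeftSpecialZ {A : Type*} (x : ℤ → A) (u : List A) : Prop :=
  ∃ a b : A, a ≠ b ∧ IsFactorZ x (a :: u) ∧ IsFactorZ x (b :: u)

def RightSpecialZ {A : Type*} (x : ℤ → A) (u : List A) : Prop :=
  ∃ a b : A, a ≠ b ∧ IsFactorZ x (u ++ [a]) ∧ IsFactorZ x (u ++ [b])

def BispecialZ {A : Type*} (x : ℤ → A) (u : List A) : Prop :=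
  LeftSpecialZ x u ∧ RightSpecialZ x u

/-- A bi-infinite word over `{0,1}` is Sturmian if it is aperiodic with complexity `n + 1`. -/
def SturmianZ (x : ℤ → Fin 2) : Prop :=
  AperiodicZ x ∧ ∀ n : ℕ, complexityZ x n = n + 1

/-- `x_{[-n, n+1]} = r_n(x) 01 l_n(x)` for all `n`. -/
def UpperCharacteristic (x : ℤ → Fin 2) : Prop :=
  SturmianZ x ∧ ∀ n : ℕ, ∃ r l : List (Fin 2),
    r.length = n ∧ RightSpecialZ x r ∧ l.length = n ∧ LeftSpecialZ x l ∧
    subwordZ x (-(n : ℤ)) (2 * n + 2) = r ++ [0, 1] ++ l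

/-- `x_{[-n, n+1]} = r_n(x) 10 l_n(x)` for all `n`. -/
def LowerCharacteristic (x : ℤ → Fin 2) : Prop :=
  SturmianZ x ∧ ∀ n : ℕ, ∃ r l : List (Fin 2),
    r.length = n ∧ RightSpecialZ x r ∧ l.length = n ∧ LeftSpecialZ x l ∧
    subwordZ x (-(n : ℤ)) (2 * n + 2) = r ++ [1, 0] ++ l

def CharacteristicSturmian (x : ℤ → Fin 2) : Prop :=
  UpperCharacteristic x ∨ LowerCharacteristic x

def QuasiSturmianZ {A : Type*} (x : ℤ → A) : Prop :=
  AperiodicZ x ∧ ∃ (n₀ k : ℕ), 1 ≤ k ∧ ∀ n : ℕ, n₀ ≤ n → complexityZ x n = n + k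

/-- Starting position in `φ(x)` of the image `φ(x_i)` (image of `x_0` starts at `0`). -/
def blockStart {A B : Type*} (φ : A → List B) (x : ℤ → A) (i : ℤ) : ℤ :=
  if 0 ≤ i then ((List.range i.toNat).map fun j => ((φ (x (j : ℤ))).length : ℤ)).sum
  else -((List.range (-i).toNat).map fun j => ((φ (x (-(j : ℤ) - 1))).length : ℤ)).sum

/-- `y` is the image of the bi-infinite word `x` under the substitution `φ`
(with images of letters nonempty). -/
def IsSubstImage {A B : Type*} (φ : A → List B) (x : ℤ → A) (y : ℤ → B) : Prop :=
  (∀ a : A, φ a ≠ []) ∧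
  ∀ i : ℤ, subwordZ y (blockStart φ x i) (φ (x i)).length = φ (x i)

/-- `φ_x(Γ)`: positions of `φ(x)` occupied by images of letters at positions in `Γ`. -/
def substSupp {A B : Type*} (φ : A → List B) (x : ℤ → A) (Γ : Set ℤ) : Set ℤ :=
  {n : ℤ | ∃ i ∈ Γ, blockStart φ x i ≤ n ∧ n < blockStart φ x i + ((φ (x i)).length : ℤ)}

/-- `φ_x^{-1}(Γ)`: positions of letters of `x` whose image blocks in `φ(x)` meet `Γ`. -/
def substPreimage {A B : Type*} (φ : A → List B) (x : ℤ → A) (Γ : Set ℤ) : Set ℤ :=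
  {i : ℤ | ∃ n ∈ Γ, blockStart φ x i ≤ n ∧ n < blockStart φ x i + ((φ (x i)).length : ℤ)}

/-- The set of occurrences of `w` in the finite word `u`. -/
def occSetF {B : Type*} (u w : List B) : Set ℕ :=
  {i : ℕ | i + w.length ≤ u.length ∧ (u.drop i).take w.length = w}

/-- `φ` is a return morphism for `w`. -/
def IsReturnMorphism {A B : Type*} (φ : A → List B) (w : List B) : Prop :=
  w ≠ [] ∧ Function.Injective φ ∧ (∀ a : A, φ a ≠ []) ∧
  ∀ a : A, occSetF (w ++ φ a) w = {0, (φ a).length}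

def listPow {A : Type*} (u : List A) : ℕ → List A
  | 0 => []
  | n + 1 => u ++ listPow u n

/-- A substitution on `{0,1}` is acyclic if `φ(0)` and `φ(1)` are not powers of one word. -/
def AcyclicSubst {A : Type*} (φ : Fin 2 → List A) : Prop :=
  ¬ ∃ (u : List A) (m n : ℕ), φ 0 = listPow u m ∧ φ 1 = listPow u n

/-- The substitution `L₀ : 0 ↦ 0, 1 ↦ 01`. -/
def Lzero : Fin 2 → List (Fin 2) := fun a => if a = 0 then [0] else [0, 1]

/-- The substitution `L₁ : 0 ↦ 10, 1 ↦ 1`. -/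
def Lone : Fin 2 → List (Fin 2) := fun a => if a = 0 then [1, 0] else [1]

/-- A finite word has period `r`. -/
def PeriodicF {A : Type*} (w : List A) (r : ℕ) : Prop :=
  ∀ i : ℕ, i + r < w.length → w[i]? = w[i + r]?

/-- `Γ` is a string attractor of the finite word `w`. -/
def IsAttractorF {A : Type*} (w : List A) (Γ : Set ℕ) : Prop :=
  ∀ u : List A, u ≠ [] → u <:+: w →
    ∃ i : ℕ, i + u.length ≤ w.length ∧ (w.drop i).take u.length = u ∧
      ∃ p ∈ Γ, i ≤ p ∧ p < i + u.length

def RecurrentZ {A : Type*} (x : ℤ → A) : Prop :=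
  ∀ w : List A, IsFactorZ x w → {i : ℤ | occursAt x w i}.Infinite

def UniformlyRecurrentZ {A : Type*} (x : ℤ → A) : Prop :=
  ∀ w : List A, IsFactorZ x w →
    ∃ n : ℕ, ∀ i : ℤ, ∃ j : ℤ, i ≤ j ∧ j + (w.length : ℤ) ≤ i + (n : ℤ) ∧ occursAt x w j

def ModuloRecurrentZ {A : Type*} (x : ℤ → A) : Prop :=
  ∀ w : List A, IsFactorZ x w → ∀ k : ℕ, 1 ≤ k → ∀ r : ℤ,
    ∃ i : ℤ, occursAt x w i ∧ (k : ℤ) ∣ (i - r)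

/-- A shift space: closed (product topology, `A` discrete) and shift-invariant. -/
def IsShiftSpace {A : Type*} (X : Set (ℤ → A)) : Prop :=
  @IsClosed _ (@Pi.topologicalSpace ℤ (fun _ => A) (fun _ => ⊥)) X ∧ shiftZ 1 '' X = X

def IsAttractorX {A : Type*} (X : Set (ℤ → A)) (Γ : Set ℤ) : Prop :=
  ∀ x ∈ X, IsAttractorZ x Γ

def MinimalShift {A : Type*} (X : Set (ℤ → A)) : Prop :=
  IsShiftSpace X ∧ ∀ Y ⊆ X, IsShiftSpace Y → Y = ∅ ∨ Y = X

/-- The orbit closure of a bi-infinite word (product topology, `A` discrete). -/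
def orbitClosureZ {A : Type*} (x : ℤ → A) : Set (ℤ → A) :=
  @closure _ (@Pi.topologicalSpace ℤ (fun _ => A) (fun _ => ⊥)) {y | ∃ k : ℤ, y = shiftZ k x}

section Helpers

lemma subwordZ_eq {A : Type*} (x : ℤ → A) (i : ℤ) (n : ℕ) :
    subwordZ x i n = (List.range n).map (fun j : ℕ => x (i + (j : ℤ))) := by
  unfold subwordZ
  simp
  rw [← List.map_eq_flatMap, List.map_map]
  rfl

lemma subwordZ_length' {A : Type*} (x : ℤ → A) (i : ℤ) (n : ℕ) :
    (subwordZ x i n).length = n := by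
  simp only [subwordZ_eq, List.length_map, List.length_range]

lemma occursAt_iff' {A : Type*} (x : ℤ → A) (w : List A) (i : ℤ) :
    occursAt x w i ↔ ∀ j : ℕ, ∀ hj : j < w.length, x (i + (j : ℤ)) = w[j] := by
  constructor
  · intro h j hj
    have h2 : (subwordZ x i w.length)[j]'(by simpa only [subwordZ_length'] using hj) = w[j] :=
      List.getElem_of_eq h _
    simpa only [subwordZ_eq, List.getElem_map, List.getElem_range] using h2
  · intro h
    apply List.ext_getElem (subwordZ_length' x i w.length)
    intro j h₁ h₂
    simp only [subwordZ_eq, List.getElem_map, List.getElem_range]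
    exact h j h₂

lemma occursAt_subwordZ {A : Type*} (x : ℤ → A) (i : ℤ) (n : ℕ) :
    occursAt x (subwordZ x i n) i := by
  unfold occursAt
  rw [subwordZ_length']

lemma eval_of_occursAt_subwordZ {A : Type*} {x : ℤ → A} {n j : ℤ} {L : ℕ}
    (h : occursAt x (subwordZ x n L) j) {t : ℕ} (ht : t < L) :
    x (j + (t : ℤ)) = x (n + (t : ℤ)) := by
  have h2 := (occursAt_iff' x _ j).mp h t (by simpa only [subwordZ_length'] using ht)
  simpa only [subwordZ_eq, List.getElem_map, List.getElem_range] using h2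

lemma eq_of_dvd_period {B : Type*} {y : ℤ → B} {p : ℕ} (hpure : ∀ n : ℤ, y n = y (n + (p : ℤ)))
    {n m : ℤ} (hd : (p : ℤ) ∣ m - n) : y n = y m := by
  have hper : Function.Periodic y (p : ℤ) := fun t => (hpure t).symm
  obtain ⟨d, hd⟩ := hd
  have h2 := (hper.int_mul d) n
  rw [show m = n + (d : ℤ) * (p : ℤ) by linear_combination hd]
  exact h2.symm

end Helpers

/-- A uniformly recurrent word is modulo-recurrent iff its image under every
cellular automaton is aperiodic or constant. -/
theorem moduloRecurrent_iff_completely_aperiodic {A : Type*} [Fintype A] (x : ℤ → A)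
    (hur : UniformlyRecurrentZ x) :
    ModuloRecurrentZ x ↔
      ∀ (B : Type) (_ : Finite B) (M : ℕ), 1 ≤ M → ∀ ψ : (Fin M → A) → B,
        AperiodicZ (fun n : ℤ => ψ (fun j : Fin M => x (n + (j.val : ℤ)))) ∨
        ∃ b : B, ∀ n : ℤ, ψ (fun j : Fin M => x (n + (j.val : ℤ))) = b := by
  classical
  constructor
  · -- modulo-recurrent ⇒ every image aperiodic or constant
    intro hmr B _ M hM ψ
    set y : ℤ → B := fun n : ℤ => ψ (fun j : Fin M => x (n + (j.val : ℤ))) with hydef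
    by_cases hEP : EventuallyPeriodicZ y
    · right
      -- if two windows of `x` agree, so do the corresponding values of `y`
      have hwineq : ∀ (L : ℕ), ∀ n j : ℤ, occursAt x (subwordZ x n L) j →
          ∀ s : ℤ, 0 ≤ s → s + (M : ℤ) ≤ (L : ℤ) → y (j + s) = y (n + s) := by
        intro L n j hocc s hs0 hsM
        show ψ _ = ψ _
        congr 1
        funext t
        set u : ℕ := (s + (t.val : ℤ)).toNat with hu
        have hu' : (u : ℤ) = s + (t.val : ℤ) := Int.toNat_of_nonneg (by positivity)
        have ht' : t.val < M := t.isLt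
        have hst : u < L := by omega
        have h1 := eval_of_occursAt_subwordZ hocc hst
        rw [hu'] at h1
        calc x (j + s + (t.val : ℤ)) = x (j + (s + (t.val : ℤ))) := by ring_nf
          _ = x (n + (s + (t.val : ℤ))) := h1
          _ = x (n + s + (t.val : ℤ)) := by ring_nf
      -- eventual periodicity upgrades to pure periodicity
      have hpure : ∃ p : ℕ, 1 ≤ p ∧ ∀ n : ℤ, y n = y (n + (p : ℤ)) := by
        rcases hEP with ⟨N, p, hp1, hp⟩ | ⟨N, p, hp1, hp⟩
        · refine ⟨p, hp1, fun n => ?_⟩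
          obtain ⟨n₀, hn₀⟩ := hur (subwordZ x n (M + p)) ⟨n, occursAt_subwordZ x n (M + p)⟩
          obtain ⟨j, hj1, hj2, hjocc⟩ := hn₀ N
          have e1 : y (j + 0) = y (n + 0) :=
            hwineq (M + p) n j hjocc 0 le_rfl (by push_cast; omega)
          have e2 : y (j + (p : ℤ)) = y (n + (p : ℤ)) :=
            hwineq (M + p) n j hjocc (p : ℤ) (by positivity) (by push_cast; omega)
          have e3 : y j = y (j + (p : ℤ)) := hp j hj1
          simp only [add_zero] at e1
          rw [← e1, e3, e2]
        · refine ⟨p, hp1, fun n => ?_⟩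
          obtain ⟨n₀, hn₀⟩ := hur (subwordZ x n (M + p)) ⟨n, occursAt_subwordZ x n (M + p)⟩
          obtain ⟨j, hj1, hj2, hjocc⟩ := hn₀ (N - (n₀ : ℤ) - (p : ℤ))
          rw [subwordZ_length'] at hj2
          have e1 : y (j + 0) = y (n + 0) :=
            hwineq (M + p) n j hjocc 0 le_rfl (by push_cast; omega)
          have e2 : y (j + (p : ℤ)) = y (n + (p : ℤ)) :=
            hwineq (M + p) n j hjocc (p : ℤ) (by positivity) (by push_cast; omega)
          have e3 : y (j + (p : ℤ)) = y j := by
            have h4 := hp (j + (p : ℤ)) (by push_cast at hj2 ⊢; omega)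
            simpa using h4
          simp only [add_zero] at e1
          rw [← e1, ← e3, e2]
      obtain ⟨p, hp1, hpu⟩ := hpure
      refine ⟨y 0, fun n => ?_⟩
      obtain ⟨i, hiocc, hidvd⟩ := hmr (subwordZ x n M) ⟨n, occursAt_subwordZ x n M⟩ p hp1 0
      have e1 : y (i + 0) = y (n + 0) :=
        hwineq M n i hiocc 0 le_rfl (by omega)
      simp only [add_zero] at e1
      have e2 : y 0 = y i := eq_of_dvd_period hpu (by simpa using hidvd)
      show y n = y 0
      rw [← e1, ← e2]
    · left; exact hEP
  · -- every image aperiodic or constant ⇒ modulo-recurrent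
    intro hca w hwf k hk r
    by_contra hcon
    push_neg at hcon
    -- hcon : ∀ i, occursAt x w i → ¬ (k:ℤ) ∣ i - r
    haveI : NeZero k := ⟨by omega⟩
    set M₀ : ℕ := w.length with hM₀def
    have hw0 : 1 ≤ M₀ := by
      rcases Nat.eq_zero_or_pos M₀ with h0 | h0
      · exfalso
        have hnil : w = [] := List.length_eq_zero_iff.mp h0
        refine hcon r ?_ ⟨0, by ring⟩
        rw [hnil]
        rfl
      · exact h0
    -- the set of residues of occurrences of w
    set T : Set (ZMod k) := {t | ∃ i : ℤ, occursAt x w i ∧ (i : ZMod k) = t} with hTdef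
    obtain ⟨i₀, hi₀⟩ := hwf
    have hT0 : (i₀ : ZMod k) ∈ T := ⟨i₀, hi₀, rfl⟩
    have hrT : (r : ZMod k) ∉ T := by
      rintro ⟨i, hocc, hres⟩
      refine hcon i hocc ?_
      have hcast : ((i - r : ℤ) : ZMod k) = 0 := by push_cast; rw [hres]; ring
      exact (ZMod.intCast_zmod_eq_zero_iff_dvd _ k).mp hcast
    -- choose representative occurrences for each residue in T
    set s : ZMod k → ℤ := fun t => if h : t ∈ T then h.choose else 0 with hsdef
    have hs : ∀ t ∈ T, occursAt x w (s t) ∧ ((s t : ℤ) : ZMod k) = t := by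
      intro t ht
      simp only [hsdef, dif_pos ht]
      exact ht.choose_spec
    -- bound the representatives
    set F : Finset ℤ := Finset.univ.image s with hFdef
    have hFne : F.Nonempty := ⟨s 0, Finset.mem_image_of_mem s (Finset.mem_univ 0)⟩
    set a : ℤ := F.min' hFne with hadef
    set b : ℤ := F.max' hFne + (M₀ : ℤ) with hbdef
    have hab : ∀ t : ZMod k, a ≤ s t ∧ s t + (M₀ : ℤ) ≤ b := by
      intro t
      have hmem : s t ∈ F := Finset.mem_image_of_mem s (Finset.mem_univ t)
      exact ⟨F.min'_le _ hmem, by have := F.le_max' _ hmem; omega⟩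
    have hba : (1 : ℤ) ≤ b - a := by
      have := hab 0
      omega
    set Lv : ℕ := (b - a).toNat with hLvdef
    have hLv : (Lv : ℤ) = b - a := Int.toNat_of_nonneg (by omega)
    -- the word v covering representatives of all residues
    obtain ⟨M, hM⟩ := hur (subwordZ x a Lv) ⟨a, occursAt_subwordZ x a Lv⟩
    rw [subwordZ_length'] at hM
    have hM1 : 1 ≤ M := by
      obtain ⟨j, h1, h2, _⟩ := hM 0
      omega
    -- occurrences of w inside occurrences of v
    have hwin : ∀ q : ℤ, occursAt x (subwordZ x a Lv) q → ∀ t ∈ T,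
        occursAt x w (q + (s t - a)) := by
      intro q hq t ht
      rw [occursAt_iff']
      intro l hl
      have hocc := ((occursAt_iff' x w (s t)).mp (hs t ht).1) l hl
      have h1 : s t - a + (l : ℤ) ≥ 0 := by have := (hab t).1; omega
      have h2 : s t - a + (l : ℤ) < (Lv : ℤ) := by
        have := (hab t).2
        rw [hLv]
        rw [hM₀def] at *
        omega
      set u : ℕ := (s t - a + (l : ℤ)).toNat with hudef
      have hu' : (u : ℤ) = s t - a + (l : ℤ) := Int.toNat_of_nonneg h1
      have h3 := eval_of_occursAt_subwordZ hq (t := u) (by omega)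
      rw [hu'] at h3
      calc x (q + (s t - a) + (l : ℤ)) = x (q + (s t - a + (l : ℤ))) := by ring_nf
        _ = x (a + (s t - a + (l : ℤ))) := h3
        _ = x (s t + (l : ℤ)) := by ring_nf
        _ = w[l] := hocc
    -- residue translation invariance
    have hinv : ∀ q : ℤ, occursAt x (subwordZ x a Lv) q → ∀ t ∈ T,
        t + ((q - a : ℤ) : ZMod k) ∈ T := by
      intro q hq t ht
      refine ⟨q + (s t - a), hwin q hq t ht, ?_⟩
      have hst := (hs t ht).2
      push_cast
      linear_combination hst
    have himg : ∀ c : ZMod k, (∀ t ∈ T, t + c ∈ T) → ∀ t ∈ T, ∃ t₁ ∈ T, t₁ + c = t := by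
      intro c hmaps
      have himage : (fun t => t + c) '' T = T :=
        Set.eq_of_subset_of_ncard_le (by rintro _ ⟨t, ht, rfl⟩; exact hmaps t ht)
          (le_of_eq (Set.ncard_image_of_injective T (add_left_injective c)).symm)
          (Set.toFinite T)
      intro t ht
      rw [← himage] at ht
      obtain ⟨t₁, ht₁, he⟩ := ht
      exact ⟨t₁, ht₁, he⟩
    -- the cellular automaton recording residues of occurrences in a window
    set ψ : (Fin M → A) → Set (ZMod k) := fun u =>
      {t | ∃ j : ℕ, ∃ hj : j + M₀ ≤ M,
        (∀ l : ℕ, ∀ hl : l < M₀, u ⟨j + l, by omega⟩ = w[l]) ∧ ((j : ℕ) : ZMod k) = t}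
      with hψdef
    have hy : ∀ n : ℤ, ψ (fun j : Fin M => x (n + (j.val : ℤ)))
        = {t : ZMod k | t + ((n : ℤ) : ZMod k) ∈ T} := by
      intro n
      ext t
      simp only [hψdef, Set.mem_setOf_eq]
      constructor
      · rintro ⟨j, hj, hocc, rfl⟩
        have hoccw : occursAt x w (n + (j : ℤ)) := by
          rw [occursAt_iff']
          intro l hl
          have := hocc l hl
          calc x (n + (j : ℤ) + (l : ℤ)) = x (n + ((j + l : ℕ) : ℤ)) := by push_cast; ring_nf
            _ = w[l] := this
        refine ⟨n + (j : ℤ), hoccw, ?_⟩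
        push_cast
        ring
      · intro ht
        obtain ⟨q, hq1, hq2, hqocc⟩ := hM n
        obtain ⟨t₁, ht₁, hteq⟩ := himg ((q - a : ℤ) : ZMod k) (fun t' ht' => hinv q hqocc t' ht')
          (t + ((n : ℤ) : ZMod k)) ht
        have hocc := hwin q hqocc t₁ ht₁
        set i : ℤ := q + (s t₁ - a) with hidef
        have hge : n ≤ i := by have := (hab t₁).1; omega
        have hle : i + (M₀ : ℤ) ≤ n + (M : ℤ) := by
          have := (hab t₁).2
          omega
        have hin : ((i - n).toNat : ℤ) = i - n := Int.toNat_of_nonneg (by omega)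
        refine ⟨(i - n).toNat, by omega, ?_, ?_⟩
        · intro l hl
          have := ((occursAt_iff' x w i).mp hocc) l hl
          calc x (n + (((i - n).toNat + l : ℕ) : ℤ)) = x (i + (l : ℤ)) := by push_cast; rw [hin]; ring_nf
            _ = w[l] := this
        · have hco : (((i - n).toNat : ℕ) : ZMod k) = (((i - n : ℤ)) : ZMod k) := by
            conv_rhs => rw [← hin]
            rw [Int.cast_natCast]
          rw [hco]
          have hs1 := (hs t₁ ht₁).2
          rw [hidef]
          push_cast at hteq ⊢
          linear_combination hteq + hs1
    -- apply the hypothesis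
    rcases hca (Set (ZMod k)) inferInstance M hM1 ψ with hap | ⟨c, hc⟩
    · refine hap (Or.inl ⟨0, k, hk, fun n _ => ?_⟩)
      simp only [hy]
      have : ((n + (k : ℤ) : ℤ) : ZMod k) = ((n : ℤ) : ZMod k) := by
        push_cast
        simp [ZMod.natCast_self]
      rw [this]
    · set t₀ : ZMod k := (i₀ : ZMod k) with ht₀def
      set n₁ : ℤ := ((t₀ - (r : ZMod k)).val : ℤ) with hn₁def
      have hcast : ((n₁ : ℤ) : ZMod k) = t₀ - (r : ZMod k) := by
        rw [hn₁def]
        push_cast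
        rw [ZMod.natCast_val, ZMod.cast_id]
      have he : ({t : ZMod k | t + ((0 : ℤ) : ZMod k) ∈ T} : Set (ZMod k))
          = {t : ZMod k | t + ((n₁ : ℤ) : ZMod k) ∈ T} := by
        rw [← hy, ← hy, hc 0, hc n₁]
      have h0 : (r : ZMod k) ∉ {t : ZMod k | t + ((0 : ℤ) : ZMod k) ∈ T} := by
        simpa using hrT
      have h1 : (r : ZMod k) ∈ {t : ZMod k | t + ((n₁ : ℤ) : ZMod k) ∈ T} := by
        simp only [Set.mem_setOf_eq, hcast]
        convert hT0 using 2
        ring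
      rw [he] at h0
      exact h0 h1
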